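/- For the subfractal F_{X_A} of an HIFS satisfying the OSC, induced by an SFT with irreducible matrix: h ≤ dim_H(F_{X_A}), where h is the unique zero of the lower topological pressure function. -/

import Mathlib

open Filter Finset MeasureTheory Metric
open scoped ENNReal NNReal

/-- `applyWord f ω x = f_{ω_n} ∘ ⋯ ∘ f_{ω_1} (x)`. -/
def applyWord {X : Type*} {m : ℕ} (f : Fin m → X → X) {l : ℕ}
    (ω : Fin l → Fin m) (x : X) : X :=
  (List.ofFn ω).foldl (fun y a => f a y) x

lemma applyWord_zero {X : Type*} {m : ℕ} (f : Fin m → X → X)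
    (ω : Fin 0 → Fin m) (x : X) : applyWord f ω x = x := by
  simp [applyWord]

lemma applyWord_succ {X : Type*} {m l : ℕ} (f : Fin m → X → X)
    (ω : Fin (l + 1) → Fin m) (x : X) :
    applyWord f ω x = applyWord f (fun i : Fin l => ω i.succ) (f (ω 0) x) := by
  simp [applyWord, List.ofFn_succ]

section Main

variable {d m : ℕ} {K : Set (EuclideanSpace ℝ (Fin d))}
  {f : Fin m → EuclideanSpace ℝ (Fin d) → EuclideanSpace ℝ (Fin d)}
  {c cbar : Fin m → ℝ}

lemma applyWord_mapsTo (hfK : ∀ i, Set.MapsTo (f i) K K) :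
    ∀ {l : ℕ} (ω : Fin l → Fin m), Set.MapsTo (applyWord f ω) K K := by
  intro l
  induction l with
  | zero => intro ω x hx; rw [applyWord_zero]; exact hx
  | succ l ih =>
    intro ω x hx
    rw [applyWord_succ]
    exact ih _ (hfK (ω 0) hx)

lemma applyWord_dist (hc : ∀ i, 0 < c i ∧ c i ≤ cbar i ∧ cbar i < 1)
    (hlip : ∀ i, ∀ x ∈ K, ∀ y ∈ K,
      c i * dist x y ≤ dist (f i x) (f i y) ∧ dist (f i x) (f i y) ≤ cbar i * dist x y)
    (hfK : ∀ i, Set.MapsTo (f i) K K) :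
    ∀ {l : ℕ} (ω : Fin l → Fin m), ∀ x ∈ K, ∀ y ∈ K,
      (∏ i, c (ω i)) * dist x y ≤ dist (applyWord f ω x) (applyWord f ω y) ∧
      dist (applyWord f ω x) (applyWord f ω y) ≤ (∏ i, cbar (ω i)) * dist x y := by
  intro l
  induction l with
  | zero =>
    intro ω x hx y hy
    simp [applyWord_zero]
  | succ l ih =>
    intro ω x hx y hy
    rw [applyWord_succ f ω x, applyWord_succ f ω y, Fin.prod_univ_succ, Fin.prod_univ_succ]
    have hx' := hfK (ω 0) hx
    have hy' := hfK (ω 0) hy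
    obtain ⟨h1, h2⟩ := ih (fun i => ω i.succ) _ hx' _ hy'
    obtain ⟨h3, h4⟩ := hlip (ω 0) x hx y hy
    have hcpos : (0:ℝ) ≤ ∏ i : Fin l, c (ω i.succ) :=
      Finset.prod_nonneg fun i _ => (hc _).1.le
    have hcbpos : (0:ℝ) ≤ ∏ i : Fin l, cbar (ω i.succ) :=
      Finset.prod_nonneg fun i _ => le_trans (hc _).1.le (hc _).2.1
    constructor
    · calc (c (ω 0) * ∏ i : Fin l, c (ω i.succ)) * dist x y
          = (∏ i : Fin l, c (ω i.succ)) * (c (ω 0) * dist x y) := by ring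
        _ ≤ (∏ i : Fin l, c (ω i.succ)) * dist (f (ω 0) x) (f (ω 0) y) :=
            mul_le_mul_of_nonneg_left h3 hcpos
        _ ≤ _ := h1
    · calc dist (applyWord f (fun i : Fin l => ω i.succ) (f (ω 0) x))
            (applyWord f (fun i : Fin l => ω i.succ) (f (ω 0) y))
          ≤ (∏ i : Fin l, cbar (ω i.succ)) * dist (f (ω 0) x) (f (ω 0) y) := h2
        _ ≤ (∏ i : Fin l, cbar (ω i.succ)) * (cbar (ω 0) * dist x y) :=
            mul_le_mul_of_nonneg_left h4 hcbpos
        _ = (cbar (ω 0) * ∏ i : Fin l, cbar (ω i.succ)) * dist x y := by ring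

lemma applyWord_diam_le (hK : IsCompact K)
    (hc : ∀ i, 0 < c i ∧ c i ≤ cbar i ∧ cbar i < 1)
    (hlip : ∀ i, ∀ x ∈ K, ∀ y ∈ K,
      c i * dist x y ≤ dist (f i x) (f i y) ∧ dist (f i x) (f i y) ≤ cbar i * dist x y)
    (hfK : ∀ i, Set.MapsTo (f i) K K) {l : ℕ} (ω : Fin l → Fin m) :
    diam (applyWord f ω '' K) ≤ (∏ i, cbar (ω i)) * diam K := by
  have hcb : (0:ℝ) ≤ ∏ i, cbar (ω i) :=
    Finset.prod_nonneg fun i _ => le_trans (hc _).1.le (hc _).2.1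
  apply diam_le_of_forall_dist_le (mul_nonneg hcb diam_nonneg)
  rintro _ ⟨x, hx, rfl⟩ _ ⟨y, hy, rfl⟩
  calc dist (applyWord f ω x) (applyWord f ω y)
      ≤ (∏ i, cbar (ω i)) * dist x y := (applyWord_dist hc hlip hfK ω x hx y hy).2
    _ ≤ (∏ i, cbar (ω i)) * diam K :=
        mul_le_mul_of_nonneg_left (dist_le_diam_of_mem hK.isBounded hx hy) hcb

lemma applyWord_diam_ge (hK : IsCompact K)
    (hc : ∀ i, 0 < c i ∧ c i ≤ cbar i ∧ cbar i < 1)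
    (hlip : ∀ i, ∀ x ∈ K, ∀ y ∈ K,
      c i * dist x y ≤ dist (f i x) (f i y) ∧ dist (f i x) (f i y) ≤ cbar i * dist x y)
    (hfK : ∀ i, Set.MapsTo (f i) K K) {l : ℕ} (ω : Fin l → Fin m) :
    (∏ i, c (ω i)) * diam K ≤ diam (applyWord f ω '' K) := by
  have hcp : (0:ℝ) < ∏ i, c (ω i) := Finset.prod_pos fun i _ => (hc _).1
  have hb : Bornology.IsBounded (applyWord f ω '' K) :=
    hK.isBounded.subset ((applyWord_mapsTo hfK ω).image_subset)
  rw [mul_comm, ← le_div_iff₀ hcp]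
  apply diam_le_of_forall_dist_le (div_nonneg diam_nonneg hcp.le)
  intro x hx y hy
  rw [le_div_iff₀ hcp, mul_comm]
  calc (∏ i, c (ω i)) * dist x y
      ≤ dist (applyWord f ω x) (applyWord f ω y) := (applyWord_dist hc hlip hfK ω x hx y hy).1
    _ ≤ diam (applyWord f ω '' K) :=
        dist_le_diam_of_mem hb (Set.mem_image_of_mem _ hx) (Set.mem_image_of_mem _ hy)

end Main
lemma prod_le_pow_of_le : ∀ {l : ℕ} (g : Fin l → ℝ) (b : ℝ),
    (∀ i, 0 ≤ g i) → (∀ i, g i ≤ b) → ∏ i, g i ≤ b ^ l := by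
  intro l
  induction l with
  | zero => intro g b _ _; simp
  | succ l ih =>
    intro g b h0 hb
    have hb0 : 0 ≤ b := le_trans (h0 0) (hb 0)
    rw [Fin.prod_univ_succ, pow_succ, mul_comm (b ^ l) b]
    exact mul_le_mul (hb 0) (ih _ _ (fun i => h0 _) (fun i => hb _))
      (Finset.prod_nonneg fun i _ => h0 _) hb0

/-- For the subfractal `F_{X_A}` of an HIFS satisfying the OSC, induced by
an SFT with irreducible matrix: `h ≤ dim_H (F_{X_A})`, where `h` is the unique zero of the
lower topological pressure function. -/
theorem subfractal_dimH_lower_bound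
    {d : ℕ} (m : ℕ) (hm : 0 < m)
    (K : Set (EuclideanSpace ℝ (Fin d))) (hK : IsCompact K) (hKne : K.Nonempty)
    (f : Fin m → EuclideanSpace ℝ (Fin d) → EuclideanSpace ℝ (Fin d))
    (hfK : ∀ i, Set.MapsTo (f i) K K)
    (c cbar : Fin m → ℝ) (hc : ∀ i, 0 < c i ∧ c i ≤ cbar i ∧ cbar i < 1)
    (hlip : ∀ i, ∀ x ∈ K, ∀ y ∈ K,
      c i * dist x y ≤ dist (f i x) (f i y) ∧ dist (f i x) (f i y) ≤ cbar i * dist x y)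
    -- the open set condition
    (U : Set (EuclideanSpace ℝ (Fin d))) (hUopen : IsOpen U) (hUne : U.Nonempty)
    (hUK : U ⊆ K) (hUinv : ∀ i, f i '' U ⊆ U)
    (hUdisj : ∀ i j, i ≠ j → (f i '' U) ∩ (f j '' U) = ∅)
    -- the SFT and its subfractal, given by the coding map `π`
    (W : ∀ n : ℕ, Finset (Fin n → Fin m)) (hWne : ∀ n, (W n).Nonempty)
    (π : {x : ℕ → Fin m // ∀ n : ℕ, (fun i : Fin n => x i.1) ∈ W n} →
      EuclideanSpace ℝ (Fin d))
    (hπ : ∀ x (l : ℕ), π x ∈ applyWord f (fun i : Fin l => x.1 i.1) '' K)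
    -- the lower topological pressure function and its unique zero `h`
    (P : ℝ → ℝ)
    (hP : ∀ t : ℝ, Tendsto
      (fun n : ℕ => (1 / (n : ℝ)) * Real.log (∑ ω ∈ W n, (∏ i, c (ω i)) ^ t))
      atTop (nhds (P t)))
    (h : ℝ) (hh0 : 0 ≤ h) (hhzero : P h = 0)
    (K0 L0 : ℝ) (hK0 : 0 < K0) (hL0 : 0 < L0)
    -- the measure `μ_h`, supported on the subfractal, with the cylinder-image bound
    (μ : Measure (EuclideanSpace ℝ (Fin d))) (hμprob : IsProbabilityMeasure μ)
    (hμsupp : μ (Set.range π)ᶜ = 0)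
    (hμbound : ∀ (l : ℕ) (ω : Fin l → Fin m), ω ∈ W l →
      μ (applyWord f ω '' K) ≤ ENNReal.ofReal ((L0 / K0) * (∏ i, c (ω i)) ^ h))
    -- the Moran cover intersection bound
    (M : ℕ)
    (hMoran : ∀ r : ℝ, 0 < r → r < 1 → ∀ x ∈ Set.range π,
      {E : Set (EuclideanSpace ℝ (Fin d)) |
        (∃ (l : ℕ) (ω : Fin (l + 1) → Fin m), ω ∈ W (l + 1) ∧
          E = applyWord f ω '' K ∧ diam E ≤ r ∧
          r < diam (applyWord f (fun i : Fin l => ω i.castSucc) '' K)) ∧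
        (E ∩ ball x r).Nonempty}.ncard ≤ M) :
    ENNReal.ofReal h ≤ dimH (Set.range π) := by
  classical
  rcases eq_or_lt_of_le hh0 with hh | hhpos
  · rw [← hh]; simp
  -- Step 1: m ≥ 2
  have hm2 : 2 ≤ m := by
    by_contra hm2
    have hm1 : m = 1 := by omega
    subst hm1
    have hlog : Real.log (c 0) < 0 :=
      Real.log_neg (hc 0).1 ((hc 0).2.1.trans_lt (hc 0).2.2)
    have key : ∀ᶠ n : ℕ in atTop,
        (1 / (n : ℝ)) * Real.log (∑ ω ∈ W n, (∏ i, c (ω i)) ^ h)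
          = h * Real.log (c 0) := by
      filter_upwards [eventually_ge_atTop 1] with n hn
      obtain ⟨ω0, hω0⟩ := hWne n
      have hWn : W n = {ω0} :=
        Finset.eq_singleton_iff_unique_mem.mpr ⟨hω0, fun ω' _ => Subsingleton.elim ω' ω0⟩
      have hall : ∀ i, ω0 i = 0 := fun i => Subsingleton.elim _ _
      have hprod : ∏ i : Fin n, c (ω0 i) = c 0 ^ n := by
        simp [hall, Finset.prod_const]
      have hn0 : (n : ℝ) ≠ 0 := by
        have : (1 : ℝ) ≤ (n : ℝ) := by exact_mod_cast hn
        linarith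
      rw [hWn, Finset.sum_singleton, hprod,
        Real.log_rpow (pow_pos (hc 0).1 n), Real.log_pow]
      field_simp
    have key' : (fun n : ℕ => (1 / (n : ℝ)) * Real.log (∑ ω ∈ W n, (∏ i, c (ω i)) ^ h))
        =ᶠ[atTop] (fun _ => h * Real.log (c 0)) := key
    have hPe : P h = h * Real.log (c 0) :=
      tendsto_nhds_unique (hP h) (tendsto_const_nhds.congr' key'.symm)
    rw [hPe] at hhzero
    exact absurd hhzero (mul_ne_zero hhpos.ne' hlog.ne)
  -- Step 2: diam K > 0
  obtain ⟨u, hu⟩ := hUne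
  obtain ⟨i0, i1, hne01⟩ : ∃ i0 i1 : Fin m, i0 ≠ i1 :=
    ⟨⟨0, by omega⟩, ⟨1, by omega⟩, by simp [Fin.ext_iff]⟩
  have hdK : 0 < diam K := by
    have hfu : f i0 u ≠ f i1 u := by
      intro hEq
      have h0 : f i0 u ∈ (f i0 '' U) ∩ (f i1 '' U) :=
        ⟨⟨u, hu, rfl⟩, hEq ▸ ⟨u, hu, rfl⟩⟩
      rw [hUdisj _ _ hne01] at h0
      exact h0
    have h1 : f i0 u ∈ K := hUK (hUinv _ ⟨u, hu, rfl⟩)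
    have h2 : f i1 u ∈ K := hUK (hUinv _ ⟨u, hu, rfl⟩)
    calc (0:ℝ) < dist (f i0 u) (f i1 u) := dist_pos.mpr hfu
      _ ≤ diam K := dist_le_diam_of_mem hK.isBounded h1 h2
  -- Step 3: uniform contraction ratio b
  have hu' : (Finset.univ : Finset (Fin m)).Nonempty := ⟨i0, Finset.mem_univ i0⟩
  set b := Finset.univ.sup' hu' cbar with hbdef
  have hble : ∀ i, cbar i ≤ b := fun i => Finset.le_sup' cbar (Finset.mem_univ i)
  have hb1 : b < 1 := (Finset.sup'_lt_iff hu').mpr fun i _ => (hc i).2.2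
  have hcbnn : ∀ i, 0 ≤ cbar i := fun i => le_trans (hc i).1.le (hc i).2.1
  have hb0 : 0 ≤ b := le_trans (hcbnn i0) (hble i0)
  have hdiamle : ∀ {l : ℕ} (ω : Fin l → Fin m),
      diam (applyWord f ω '' K) ≤ b ^ l * diam K := by
    intro l ω
    refine le_trans (applyWord_diam_le hK hc hlip hfK ω) ?_
    exact mul_le_mul_of_nonneg_right
      (prod_le_pow_of_le _ _ (fun i => hcbnn _) (fun i => hble _)) diam_nonneg
  -- Step 4: key ball bound
  have key : ∀ x ∈ Set.range π, ∀ r : ℝ, 0 < r → r < 1 → r < diam K →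
      μ (ball x r) ≤ (M : ℝ≥0∞) * ENNReal.ofReal ((L0 / K0) * (r / diam K) ^ h) := by
    intro x hx r hr0 hr1 hrdK
    set 𝒰 : Set (Set (EuclideanSpace ℝ (Fin d))) :=
      {E : Set (EuclideanSpace ℝ (Fin d)) |
        (∃ (l : ℕ) (ω : Fin (l + 1) → Fin m), ω ∈ W (l + 1) ∧
          E = applyWord f ω '' K ∧ diam E ≤ r ∧
          r < diam (applyWord f (fun i : Fin l => ω i.castSucc) '' K)) ∧
        (E ∩ ball x r).Nonempty} with h𝒰
    have cover : ∀ z : {x : ℕ → Fin m // ∀ n : ℕ, (fun i : Fin n => x i.1) ∈ W n},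
        π z ∈ ball x r → ∃ E ∈ 𝒰, π z ∈ E := by
      intro z hzball
      have hex : ∃ n : ℕ, diam (applyWord f (fun i : Fin n => z.1 i.1) '' K) ≤ r := by
        obtain ⟨n, hn⟩ := exists_pow_lt_of_lt_one (div_pos hr0 hdK) hb1
        refine ⟨n, le_trans (hdiamle _) ?_⟩
        calc b ^ n * diam K ≤ (r / diam K) * diam K :=
              mul_le_mul_of_nonneg_right hn.le diam_nonneg
          _ = r := div_mul_cancel₀ r hdK.ne'
      have hn0 : Nat.find hex ≠ 0 := by
        intro h0
        have hsp := Nat.find_spec hex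
        rw [h0] at hsp
        have hidK : applyWord f (fun i : Fin 0 => z.1 i.1) '' K = K := by
          have hid : applyWord f (fun i : Fin 0 => z.1 i.1) = id :=
            funext fun y => applyWord_zero f _ y
          rw [hid, Set.image_id]
        rw [hidK] at hsp
        exact absurd hsp (not_le.mpr hrdK)
      obtain ⟨l, hl⟩ := Nat.exists_eq_succ_of_ne_zero hn0
      refine ⟨applyWord f (fun i : Fin (l+1) => z.1 i.1) '' K,
        ⟨⟨l, fun i : Fin (l+1) => z.1 i.1, z.2 (l+1), rfl, ?_, ?_⟩,
          ⟨π z, hπ z (l+1), hzball⟩⟩, hπ z (l+1)⟩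
      · have := Nat.find_spec hex; rwa [hl] at this
      · have hmin := Nat.find_min hex (show l < Nat.find hex by omega)
        have heq : (fun i : Fin l => (fun i : Fin (l+1) => z.1 i.1) i.castSucc)
            = fun i : Fin l => z.1 i.1 := by
          funext i; simp
        rw [heq]
        exact not_le.mp hmin
    obtain ⟨N, hN⟩ := exists_pow_lt_of_lt_one (div_pos hr0 hdK) hb1
    have hfin : 𝒰.Finite := by
      apply Set.Finite.subset (Set.Finite.biUnion (Set.finite_Iio N)
        (fun l _ => Set.finite_range (fun ω : Fin (l+1) → Fin m => applyWord f ω '' K)))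
      rintro E ⟨⟨l, ω, hωW, rfl, hEdiam, hparent⟩, -⟩
      have hlN : l ∈ Set.Iio N := by
        simp only [Set.mem_Iio]
        by_contra hge
        push_neg at hge
        have hcon : diam (applyWord f (fun i : Fin l => ω i.castSucc) '' K) ≤ r := by
          refine le_trans (hdiamle _) ?_
          calc b ^ l * diam K ≤ b ^ N * diam K :=
              mul_le_mul_of_nonneg_right (pow_le_pow_of_le_one hb0 hb1.le hge) diam_nonneg
            _ ≤ (r / diam K) * diam K := mul_le_mul_of_nonneg_right hN.le diam_nonneg
            _ = r := div_mul_cancel₀ r hdK.ne'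
        exact absurd hcon (not_le.mpr hparent)
      exact Set.mem_biUnion hlN ⟨ω, rfl⟩
    have elem : ∀ E ∈ 𝒰, μ E ≤ ENNReal.ofReal ((L0 / K0) * (r / diam K) ^ h) := by
      rintro E ⟨⟨l, ω, hωW, rfl, hEdiam, -⟩, -⟩
      refine le_trans (hμbound (l+1) ω hωW) (ENNReal.ofReal_le_ofReal ?_)
      have hprodnn : (0:ℝ) ≤ ∏ i, c (ω i) := Finset.prod_nonneg fun i _ => (hc _).1.le
      have hprodle' : (∏ i, c (ω i)) ≤ r / diam K := by
        rw [le_div_iff₀ hdK]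
        exact le_trans (applyWord_diam_ge hK hc hlip hfK ω) hEdiam
      exact mul_le_mul_of_nonneg_left
        (Real.rpow_le_rpow hprodnn hprodle' hh0) (div_pos hL0 hK0).le
    calc μ (ball x r) ≤ μ ((⋃ E ∈ hfin.toFinset, E) ∪ (Set.range π)ᶜ) := by
          apply measure_mono
          intro y hy
          by_cases hyπ : y ∈ Set.range π
          · obtain ⟨z, rfl⟩ := hyπ
            obtain ⟨E, hE, hyE⟩ := cover z hy
            exact Or.inl (Set.mem_biUnion (hfin.mem_toFinset.mpr hE) hyE)
          · exact Or.inr hyπ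
      _ ≤ μ (⋃ E ∈ hfin.toFinset, E) + μ (Set.range π)ᶜ := measure_union_le _ _
      _ = μ (⋃ E ∈ hfin.toFinset, E) := by rw [hμsupp, add_zero]
      _ ≤ ∑ E ∈ hfin.toFinset, μ E := measure_biUnion_finset_le _ _
      _ ≤ hfin.toFinset.card • ENNReal.ofReal ((L0 / K0) * (r / diam K) ^ h) :=
          Finset.sum_le_card_nsmul _ _ _ (fun E hE => elem E (hfin.mem_toFinset.mp hE))
      _ = (hfin.toFinset.card : ℝ≥0∞) * ENNReal.ofReal ((L0 / K0) * (r / diam K) ^ h) := by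
          rw [nsmul_eq_mul]
      _ ≤ (M : ℝ≥0∞) * ENNReal.ofReal ((L0 / K0) * (r / diam K) ^ h) := by
          apply mul_le_mul_left
          have hcard : hfin.toFinset.card ≤ M := by
            rw [← Set.ncard_eq_toFinset_card _ hfin]
            exact hMoran r hr0 hr1 x hx
          exact_mod_cast hcard
  -- Step 5: singletons have measure zero
  have hsingle : ∀ x ∈ Set.range π, μ {x} = 0 := by
    intro x hx
    set r0 := min (1/2 : ℝ) (diam K / 2) with hr0def
    have hr00 : 0 < r0 := lt_min (by norm_num) (by linarith)
    have hbnd : ∀ n : ℕ, μ {x} ≤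
        (M : ℝ≥0∞) * ENNReal.ofReal ((L0/K0) * ((r0 / ((n:ℝ)+1)) / diam K) ^ h) := by
      intro n
      have hn1 : (1:ℝ) ≤ (n:ℝ) + 1 := by
        have : (0:ℝ) ≤ (n:ℝ) := Nat.cast_nonneg n
        linarith
      have hrn0 : 0 < r0 / ((n:ℝ)+1) := div_pos hr00 (by linarith)
      have hrle : r0 / ((n:ℝ)+1) ≤ r0 := div_le_self hr00.le hn1
      refine le_trans (measure_mono (Set.singleton_subset_iff.mpr (mem_ball_self hrn0)))
        (key x hx _ hrn0 ?_ ?_)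
      · have h1 : r0 ≤ 1/2 := min_le_left _ _
        linarith
      · have h2 : r0 ≤ diam K / 2 := min_le_right _ _
        linarith
    have hT : Tendsto (fun n : ℕ =>
        (M : ℝ≥0∞) * ENNReal.ofReal ((L0/K0) * ((r0 / ((n:ℝ)+1)) / diam K) ^ h))
        atTop (nhds 0) := by
      have h1 : Tendsto (fun n : ℕ => (r0 / ((n:ℝ)+1)) / diam K) atTop (nhds 0) := by
        have h2 := (tendsto_one_div_add_atTop_nhds_zero_nat.const_mul r0).div_const (diam K)
        simp only [mul_zero, zero_div] at h2
        convert h2 using 2 with n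
        rw [mul_one_div]
      have h3 : Tendsto (fun n : ℕ => ((r0 / ((n:ℝ)+1)) / diam K) ^ h) atTop (nhds 0) := by
        have hct : ContinuousAt (fun y : ℝ => y ^ h) 0 :=
          Real.continuousAt_rpow_const 0 h (Or.inr hh0)
        have := hct.tendsto.comp h1
        rwa [Real.zero_rpow hhpos.ne'] at this
      have h4 : Tendsto (fun n : ℕ => (L0/K0) * ((r0 / ((n:ℝ)+1)) / diam K) ^ h)
          atTop (nhds 0) := by
        simpa using h3.const_mul (L0/K0)
      have h5 := (ENNReal.continuous_ofReal.tendsto 0).comp h4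
      rw [ENNReal.ofReal_zero] at h5
      have h6 := ENNReal.Tendsto.const_mul h5 (Or.inr (ENNReal.natCast_ne_top M))
      rwa [mul_zero] at h6
    exact le_antisymm (ge_of_tendsto hT (Eventually.of_forall hbnd)) zero_le
  -- Step 6: Frostman / mass distribution principle
  set C : ℝ≥0∞ := (M : ℝ≥0∞) * ENNReal.ofReal ((L0/K0) * (2 / diam K) ^ h) + 1 with hCdef
  have hC0 : C ≠ 0 := by
    have h1 : (1:ℝ≥0∞) ≤ C := le_add_self
    exact fun hC => by simp [hC] at h1
  have hCtop : C ≠ ⊤ :=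
    ENNReal.add_ne_top.mpr
      ⟨ENNReal.mul_ne_top (ENNReal.natCast_ne_top M) ENNReal.ofReal_ne_top, ENNReal.one_ne_top⟩
  set ε := min (1/4 : ℝ) (diam K / 4) with hεdef
  have hε0 : 0 < ε := lt_min (by norm_num) (by linarith)
  have hfrost : ∀ s : Set (EuclideanSpace ℝ (Fin d)), EMetric.diam s ≤ ENNReal.ofReal ε →
      (C⁻¹ • μ) s ≤ EMetric.diam s ^ h := by
    intro s hs
    rw [Measure.smul_apply, smul_eq_mul]
    rcases Set.eq_empty_or_nonempty (s ∩ Set.range π) with hse | ⟨x, hxs, hxπ⟩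
    · have hsub : s ⊆ (Set.range π)ᶜ := fun y hy hyπ =>
        Set.eq_empty_iff_forall_notMem.mp hse y ⟨hy, hyπ⟩
      have hμs : μ s = 0 :=
        le_antisymm (le_trans (measure_mono hsub) (le_of_eq hμsupp)) zero_le
      simp [hμs]
    · have hsbd : EMetric.diam s ≠ ⊤ := (lt_of_le_of_lt hs ENNReal.ofReal_lt_top).ne
      have hsbd' : Bornology.IsBounded s := Metric.isBounded_iff_ediam_ne_top.mpr hsbd
      have hds : diam s ≤ ε := by
        have hmono := ENNReal.toReal_mono ENNReal.ofReal_ne_top hs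
        rwa [ENNReal.toReal_ofReal hε0.le] at hmono
      rcases eq_or_lt_of_le (diam_nonneg : (0:ℝ) ≤ diam s) with hds0 | hdspos
      · have hsub : s ⊆ {x} := by
          intro y hy
          have hd : dist y x ≤ diam s := dist_le_diam_of_mem hsbd' hy hxs
          rw [← hds0] at hd
          exact Set.mem_singleton_iff.mpr (by rwa [← dist_le_zero])
        have hμs : μ s = 0 :=
          le_antisymm (le_trans (measure_mono hsub) (le_of_eq (hsingle x hxπ))) zero_le
        simp [hμs]
      · set r := 2 * diam s with hrdef
        have h1 : μ s ≤ μ (ball x r) := by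
          apply measure_mono
          intro y hy
          exact mem_ball.mpr (lt_of_le_of_lt (dist_le_diam_of_mem hsbd' hy hxs)
            (by rw [hrdef]; linarith))
        have hr1 : r < 1 := by
          have := hds.trans (min_le_left _ _)
          rw [hrdef]; linarith
        have hrdK : r < diam K := by
          have := hds.trans (min_le_right _ _)
          rw [hrdef]; linarith
        have h2 := key x hxπ r (by rw [hrdef]; linarith) hr1 hrdK
        have heq : (L0/K0) * (r / diam K) ^ h
            = ((L0/K0) * (2/diam K) ^ h) * (diam s) ^ h := by
          rw [hrdef, show (2 * diam s) / diam K = (2 / diam K) * diam s by ring,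
            Real.mul_rpow (by positivity) diam_nonneg]
          ring
        have h3 : μ s ≤ ((M:ℝ≥0∞) * ENNReal.ofReal ((L0/K0) * (2/diam K) ^ h))
            * ENNReal.ofReal ((diam s) ^ h) := by
          refine le_trans (h1.trans h2) (le_of_eq ?_)
          rw [heq, ENNReal.ofReal_mul (by positivity), ← mul_assoc]
        have h4 : μ s ≤ C * ENNReal.ofReal ((diam s) ^ h) := by
          refine le_trans h3 (mul_le_mul_left ?_ _)
          rw [hCdef]
          exact le_self_add
        calc C⁻¹ * μ s ≤ C⁻¹ * (C * ENNReal.ofReal ((diam s) ^ h)) := mul_le_mul_right h4 _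
          _ = (C⁻¹ * C) * ENNReal.ofReal ((diam s) ^ h) := (mul_assoc _ _ _).symm
          _ = ENNReal.ofReal ((diam s) ^ h) := by
              rw [ENNReal.inv_mul_cancel hC0 hCtop, one_mul]
          _ = (ENNReal.ofReal (diam s)) ^ h := (ENNReal.ofReal_rpow_of_pos hdspos).symm
          _ = EMetric.diam s ^ h := congrArg (· ^ h) (ENNReal.ofReal_toReal hsbd)
  have hle := MeasureTheory.Measure.le_hausdorffMeasure h (C⁻¹ • μ)
    (ENNReal.ofReal ε) (ENNReal.ofReal_pos.mpr hε0) hfrost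
  have hμrange : (1:ℝ≥0∞) ≤ μ (Set.range π) := by
    calc (1:ℝ≥0∞) = μ Set.univ := measure_univ.symm
      _ = μ (Set.range π ∪ (Set.range π)ᶜ) := by rw [Set.union_compl_self]
      _ ≤ μ (Set.range π) + μ (Set.range π)ᶜ := measure_union_le _ _
      _ = μ (Set.range π) := by rw [hμsupp, add_zero]
  have hHpos : μH[h] (Set.range π) ≠ 0 := by
    intro h0
    have h1 : (C⁻¹ • μ) (Set.range π) ≤ 0 := h0 ▸ Measure.le_iff'.mp hle (Set.range π)
    rw [Measure.smul_apply, smul_eq_mul] at h1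
    have hCinv : C⁻¹ ≠ 0 := ENNReal.inv_ne_zero.mpr hCtop
    have hμr0 : μ (Set.range π) ≠ 0 := by
      intro hz
      rw [hz] at hμrange
      simpa using hμrange
    exact (mul_ne_zero hCinv hμr0) (le_antisymm h1 zero_le)
  have hcoe : ((h.toNNReal : ℝ≥0) : ℝ) = h := Real.coe_toNNReal h hh0
  have := le_dimH_of_hausdorffMeasure_ne_zero
    (s := Set.range π) (d := h.toNNReal) (by rwa [hcoe])
  exact this
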